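/- Let G be a finite solvable group of derived length d and let K be a field of prime characteristic p with p not dividing the order of G. Then the semidirect product E = K[G] ⋊ G of the additive group of the group algebra K[G] with G (where G acts by left multiplication, i.e., (a,g)(b,h) = (a + g·b, gh)) is a solvable group of derived length exactly d + 1. -/

import Mathlib

open MonoidAlgebra
open scoped commutatorElement

/-- The semidirect product `K[G] ⋊ G` of the additive group of the group algebra
`K[G]` with `G`, where `G` acts on `(K[G],+)` by left multiplication. -/
structure GroupAlgebraSDP (K G : Type*) [Field K] [Group G] where
  /-- the group algebra component -/
  fst : MonoidAlgebra K G
  /-- the group component -/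
  snd : G

namespace GroupAlgebraSDP

variable {K G : Type*} [Field K] [Group G]

noncomputable instance : Mul (GroupAlgebraSDP K G) :=
  ⟨fun x y => ⟨x.fst + single x.snd (1 : K) * y.fst, x.snd * y.snd⟩⟩

noncomputable instance : One (GroupAlgebraSDP K G) := ⟨⟨0, 1⟩⟩

noncomputable instance : Inv (GroupAlgebraSDP K G) :=
  ⟨fun x => ⟨-(single x.snd⁻¹ (1 : K) * x.fst), x.snd⁻¹⟩⟩

theorem mul_def (x y : GroupAlgebraSDP K G) :
    x * y = ⟨x.fst + single x.snd (1 : K) * y.fst, x.snd * y.snd⟩ := rfl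

theorem one_def : (1 : GroupAlgebraSDP K G) = ⟨0, 1⟩ := rfl

theorem inv_def (x : GroupAlgebraSDP K G) :
    x⁻¹ = ⟨-(single x.snd⁻¹ (1 : K) * x.fst), x.snd⁻¹⟩ := rfl

noncomputable instance : Group (GroupAlgebraSDP K G) where
  mul_assoc x y z := by
    cases x; cases y; cases z
    simp only [mul_def, GroupAlgebraSDP.mk.injEq]
    constructor
    · rw [mul_add, ← mul_assoc, single_mul_single, one_mul, add_assoc]
    · rw [mul_assoc]
  one_mul x := by
    cases x
    simp only [mul_def, one_def, zero_add]
    rw [← MonoidAlgebra.one_def, one_mul, one_mul]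
  mul_one x := by
    cases x
    simp [mul_def, one_def]
  inv_mul_cancel x := by
    cases x
    simp [mul_def, inv_def, one_def]

/-- projection onto `G` -/
noncomputable def proj : GroupAlgebraSDP K G →* G where
  toFun x := x.snd
  map_one' := rfl
  map_mul' _ _ := rfl

theorem proj_surjective : Function.Surjective (proj : GroupAlgebraSDP K G →* G) :=
  fun g => ⟨⟨0, g⟩, rfl⟩

theorem commutator_snd_one (b : MonoidAlgebra K G) (g : G) (a : MonoidAlgebra K G) :
    ⁅(⟨b, g⟩ : GroupAlgebraSDP K G), (⟨a, 1⟩ : GroupAlgebraSDP K G)⁆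
      = ⟨single g (1 : K) * a - a, 1⟩ := by
  simp only [commutatorElement_def, mul_def, inv_def, one_def, mk.injEq, mul_one, one_mul,
    inv_one, mul_inv_cancel, and_true]
  rw [← MonoidAlgebra.one_def]
  simp only [one_mul, mul_neg, ← mul_assoc, single_mul_single, mul_one, mul_inv_cancel,
    ← MonoidAlgebra.one_def, one_mul]
  abel

theorem mul_snd_one (a b : MonoidAlgebra K G) :
    (⟨a, 1⟩ : GroupAlgebraSDP K G) * ⟨b, 1⟩ = ⟨a + b, 1⟩ := by
  rw [mul_def, ← MonoidAlgebra.one_def, one_mul, mul_one]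

theorem inv_snd_one (a : MonoidAlgebra K G) :
    (⟨a, 1⟩ : GroupAlgebraSDP K G)⁻¹ = ⟨-a, 1⟩ := by
  rw [inv_def, inv_one, ← MonoidAlgebra.one_def, one_mul]

/-- the fiber of a subgroup over `1 : G`, as an additive subgroup of `K[G]` -/
noncomputable def fiber (S : Subgroup (GroupAlgebraSDP K G)) :
    AddSubgroup (MonoidAlgebra K G) where
  carrier := {a | (⟨a, 1⟩ : GroupAlgebraSDP K G) ∈ S}
  zero_mem' := by simpa [← one_def] using S.one_mem
  add_mem' ha hb := by simpa [mul_snd_one] using S.mul_mem ha hb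
  neg_mem' ha := by simpa [inv_snd_one] using S.inv_mem ha

theorem mem_fiber {S : Subgroup (GroupAlgebraSDP K G)} {a : MonoidAlgebra K G} :
    a ∈ fiber S ↔ (⟨a, 1⟩ : GroupAlgebraSDP K G) ∈ S := Iff.rfl

theorem key [Fintype G] (hcard : ∀ n : ℕ, ((Nat.card (derivedSeries G n) : K) ≠ 0)) :
    ∀ k : ℕ, ∀ h ∈ derivedSeries G k, ∀ a : MonoidAlgebra K G,
      (⟨single h (1 : K) * a - a, 1⟩ : GroupAlgebraSDP K G) ∈
        derivedSeries (GroupAlgebraSDP K G) (k + 1) := by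
  intro k
  induction k with
  | zero =>
    intro h _ a
    have hmem := Subgroup.commutator_mem_commutator
      (Subgroup.mem_top (⟨0, h⟩ : GroupAlgebraSDP K G))
      (Subgroup.mem_top (⟨a, 1⟩ : GroupAlgebraSDP K G))
    rw [commutator_snd_one] at hmem
    simpa [derivedSeries_succ, derivedSeries_zero, ← _root_.commutator_def] using hmem
  | succ k ih =>
    intro h hh a
    classical
    set L := derivedSeries G k with hLdef
    haveI : Fintype L := Fintype.ofFinite L
    have hhL : h ∈ L := by
      have hle : derivedSeries G (k + 1) ≤ L := by
        rw [derivedSeries_succ]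
        refine Subgroup.commutator_le.mpr fun g₁ h₁ g₂ h₂ => ?_
        exact L.mul_mem (L.mul_mem (L.mul_mem h₁ h₂) (L.inv_mem h₁)) (L.inv_mem h₂)
      exact hle hh
    set c : K := ((Nat.card L : K))⁻¹ with hc
    have hn : (Nat.card L : K) ≠ 0 := hcard k
    set a' : MonoidAlgebra K G := a - ∑ l : L, single (l : G) c * a with ha'
    have hs : single h (1 : K) * (∑ l : L, single (l : G) c * a)
        = ∑ l : L, single (l : G) c * a := by
      rw [Finset.mul_sum]
      simp only [← mul_assoc, single_mul_single, one_mul]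
      exact Fintype.sum_equiv (Equiv.mulLeft (⟨h, hhL⟩ : L))
        (fun l => single ((h * l : G)) c * a) (fun l => single (l : G) c * a) (fun l => rfl)
    have h1 : single h (1 : K) * a' - a' = single h (1 : K) * a - a := by
      rw [ha', mul_sub, hs]; abel
    have h2 : (⟨a', 1⟩ : GroupAlgebraSDP K G) ∈ derivedSeries (GroupAlgebraSDP K G) (k + 1) := by
      suffices hmem : a' ∈ fiber (derivedSeries (GroupAlgebraSDP K G) (k + 1)) from
        mem_fiber.mp hmem
      have hca : a = (Fintype.card L) • (c • a) := by
        rw [← Nat.card_eq_fintype_card, ← Nat.cast_smul_eq_nsmul K, smul_smul, hc,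
          mul_inv_cancel₀ hn, one_smul]
      have ha'' : a' = ∑ l : L, -(single (l : G) (1 : K) * (c • a) - c • a) := by
        have e1 : ∀ l : L, -(single (l : G) (1 : K) * (c • a) - c • a)
            = c • a - single (l : G) c * a := by
          intro l
          rw [neg_sub, mul_smul_comm, ← smul_mul_assoc, smul_single', mul_one]
        rw [ha']
        simp only [e1]
        rw [Finset.sum_sub_distrib, Finset.sum_const, Finset.card_univ, ← hca]
      rw [ha'']
      exact AddSubgroup.sum_mem _ fun l _ => AddSubgroup.neg_mem _ (ih (l : G) l.2 (c • a))
    obtain ⟨x, hx, hxh⟩ := Subgroup.mem_map.mp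
      (derivedSeries_le_map_derivedSeries (proj_surjective (K := K) (G := G)) (k + 1) hh)
    obtain ⟨b, g⟩ := x
    have hg : g = h := hxh
    subst hg
    have hfin := Subgroup.commutator_mem_commutator hx h2
    rw [commutator_snd_one, h1] at hfin
    rw [derivedSeries_succ]
    exact hfin

end GroupAlgebraSDP

/-- if `G` is a finite solvable group of derived length `d` and `K` is a
field of prime characteristic `p` not dividing `|G|`, then `E = K[G] ⋊ G` is a solvable
group of derived length exactly `d + 1`. -/
theorem derivedLength_groupAlgebraSDP
    (K G : Type*) [Field K] [Group G] [Fintype G]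
    (p : ℕ) (hp : p.Prime) [CharP K p] (hpG : ¬ p ∣ Fintype.card G)
    (d : ℕ) (hd : derivedSeries G d = ⊥) (hdmin : ∀ m < d, derivedSeries G m ≠ ⊥) :
    derivedSeries (GroupAlgebraSDP K G) (d + 1) = ⊥ ∧
      ∀ m < d + 1, derivedSeries (GroupAlgebraSDP K G) m ≠ ⊥ := by
  classical
  constructor
  · have hsnd : ∀ x ∈ derivedSeries (GroupAlgebraSDP K G) d, x.snd = 1 := by
      intro x hx
      have hmx : GroupAlgebraSDP.proj x ∈ derivedSeries G d :=
        map_derivedSeries_le_derivedSeries GroupAlgebraSDP.proj d ⟨x, hx, rfl⟩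
      rw [hd] at hmx
      exact hmx
    rw [derivedSeries_succ, eq_bot_iff]
    refine Subgroup.commutator_le.mpr fun x hx y hy => ?_
    obtain ⟨a, gx⟩ := x
    obtain ⟨b, gy⟩ := y
    have hgx : gx = 1 := hsnd _ hx
    have hgy : gy = 1 := hsnd _ hy
    subst hgx; subst hgy
    rw [Subgroup.mem_bot, GroupAlgebraSDP.commutator_snd_one, ← MonoidAlgebra.one_def,
      one_mul, sub_self, ← GroupAlgebraSDP.one_def]
  · have hcard : ∀ n : ℕ, ((Nat.card (derivedSeries G n) : K) ≠ 0) := by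
      intro n
      rw [Ne, CharP.cast_eq_zero_iff K p]
      intro hdvd
      refine hpG (hdvd.trans ?_)
      simpa [Nat.card_eq_fintype_card] using
        Subgroup.card_subgroup_dvd_card (derivedSeries G n)
    obtain ⟨x, hxd, hx1⟩ : ∃ x : GroupAlgebraSDP K G,
        x ∈ derivedSeries (GroupAlgebraSDP K G) d ∧ x ≠ 1 := by
      cases d with
      | zero =>
        refine ⟨⟨1, 1⟩, Subgroup.mem_top _, ?_⟩
        rw [GroupAlgebraSDP.one_def, Ne, GroupAlgebraSDP.mk.injEq]
        simp
      | succ k =>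
        obtain ⟨⟨h, hhk⟩, hh1⟩ :=
          Subgroup.ne_bot_iff_exists_ne_one.mp (hdmin k (Nat.lt_succ_self k))
        have hh1' : h ≠ 1 := by simpa [Subtype.ext_iff] using hh1
        refine ⟨⟨single h (1 : K) - 1, 1⟩, ?_, ?_⟩
        · have := GroupAlgebraSDP.key (K := K) hcard k h hhk 1
          simpa using this
        · intro hcontra
          rw [GroupAlgebraSDP.one_def, GroupAlgebraSDP.mk.injEq] at hcontra
          have heq : single h (1 : K) = 1 := by
            have := hcontra.1
            rwa [sub_eq_zero] at this
          rw [MonoidAlgebra.one_def] at heq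
          rcases MonoidAlgebra.single_inj.mp heq with ⟨h1, -⟩ | ⟨h0, -⟩
          · exact hh1' h1
          · exact one_ne_zero h0
    have step : ∀ n, derivedSeries (GroupAlgebraSDP K G) (n + 1) ≤
        derivedSeries (GroupAlgebraSDP K G) n := by
      intro n
      rw [derivedSeries_succ]
      refine Subgroup.commutator_le.mpr fun g₁ h₁ g₂ h₂ => ?_
      exact mul_mem (mul_mem (mul_mem h₁ h₂) (inv_mem h₁)) (inv_mem h₂)
    intro m hm hbot
    have hmd : m ≤ d := Nat.lt_succ_iff.mp hm
    have hanti : derivedSeries (GroupAlgebraSDP K G) d ≤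
        derivedSeries (GroupAlgebraSDP K G) m :=
      Nat.le_induction le_rfl (fun n hn ih => (step n).trans ih) d hmd
    have : x ∈ (⊥ : Subgroup (GroupAlgebraSDP K G)) := hbot ▸ hanti hxd
    exact hx1 (Subgroup.mem_bot.mp this)
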